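/- Let H be a real Hilbert space, let C ⊆ H be a nonempty bounded convex set, and let T : C → C be nonexpansive. Then for every x ∈ C and every integer n ≥ 1, ‖(1/n)·Σᵢ₌₀^{n−1} Tⁱx − T((1/n)·Σᵢ₌₀^{n−1} Tⁱx)‖ ≤ diam(C)/√n, where diam(C) := sup{‖u − v‖ : u, v ∈ C}. -/

import Mathlib

/-- quadratic rate of asymptotic regularity for Cesàro means of a
nonexpansive map on a nonempty bounded convex subset of a real Hilbert space:
`‖(1/n)∑ Tⁱx − T((1/n)∑ Tⁱx)‖ ≤ diam(C)/√n`. -/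
theorem cesaro_asymptotic_regularity_hilbert
    {H : Type*} [NormedAddCommGroup H] [InnerProductSpace ℝ H]
    (C : Set H) (hCne : C.Nonempty) (hCbdd : Bornology.IsBounded C)
    (hCcv : Convex ℝ C)
    (T : H → H) (hTmaps : ∀ x ∈ C, T x ∈ C)
    (hTne : ∀ x ∈ C, ∀ y ∈ C, ‖T x - T y‖ ≤ ‖x - y‖) :
    ∀ x ∈ C, ∀ n : ℕ, 1 ≤ n →
      ‖(1 / (n : ℝ)) • ∑ i ∈ Finset.range n, T^[i] x -
          T ((1 / (n : ℝ)) • ∑ i ∈ Finset.range n, T^[i] x)‖ ≤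
        Metric.diam C / Real.sqrt n := by
  intro x hx n hn
  have hnpos : (0:ℝ) < n := by exact_mod_cast hn
  set a : ℕ → H := fun i => T^[i] x with ha
  have hamem : ∀ i, a i ∈ C := by
    intro i
    induction i with
    | zero => simpa [ha] using hx
    | succ i ih =>
        have : a (i+1) = T (a i) := by
          simp [ha, Function.iterate_succ_apply']
        rw [this]; exact hTmaps _ ih
  set S : H := ∑ i ∈ Finset.range n, a i with hS
  set z : H := (1 / (n:ℝ)) • S with hz
  have hzmem : z ∈ C := by
    have h := hCcv.sum_mem (t := Finset.range n) (w := fun _ => 1/(n:ℝ)) (z := a)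
      (fun i _ => by positivity)
      (by rw [Finset.sum_const, Finset.card_range, nsmul_eq_mul, mul_one_div_cancel hnpos.ne'])
      (fun i _ => hamem i)
    simpa [hz, hS, Finset.smul_sum] using h
  have hTz : T z ∈ C := hTmaps _ hzmem
  have hSz : S = (n:ℝ) • z := by
    rw [hz, smul_smul]
    field_simp
    rw [one_smul]
  have d := Metric.diam C
  -- variance identity: ∑ (‖a i − Tz‖² − ‖a i − z‖²) = n * ‖z − Tz‖²
  have key : ∑ i ∈ Finset.range n, (‖a i - T z‖^2 - ‖a i - z‖^2)
      = (n:ℝ) * ‖z - T z‖^2 := by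
    have expand : ∀ i, ‖a i - T z‖^2 - ‖a i - z‖^2
        = 2 * inner ℝ (a i - z) (z - T z) + ‖z - T z‖^2 := by
      intro i
      have : a i - T z = (a i - z) + (z - T z) := by abel
      rw [this, @norm_add_sq_real]
      ring
    simp only [expand]
    rw [Finset.sum_add_distrib, Finset.sum_const, Finset.card_range,
      ← Finset.mul_sum, ← sum_inner (𝕜 := ℝ)]
    have : ∑ i ∈ Finset.range n, (a i - z) = 0 := by
      rw [Finset.sum_sub_distrib, ← hS, hSz, Finset.sum_const, Finset.card_range,
        ← Nat.cast_smul_eq_nsmul ℝ, sub_self]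
    rw [this]
    simp [nsmul_eq_mul]
  -- telescoping bound: ∑ ‖a i − Tz‖² ≤ ‖a 0 − Tz‖² + ∑_{i<n-1} ‖a i − z‖²
  obtain ⟨m, rfl⟩ : ∃ m, n = m + 1 := ⟨n - 1, (Nat.succ_pred_eq_of_pos hn).symm⟩
  have step : ∀ i, ‖a (i+1) - T z‖ ≤ ‖a i - z‖ := by
    intro i
    have : a (i+1) = T (a i) := by simp [ha, Function.iterate_succ_apply']
    rw [this]
    exact hTne _ (hamem i) _ hzmem
  have sum1 : ∑ i ∈ Finset.range (m+1), ‖a i - T z‖^2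
      = ‖a 0 - T z‖^2 + ∑ i ∈ Finset.range m, ‖a (i+1) - T z‖^2 := by
    rw [Finset.sum_range_succ']; ring
  have sum2 : ∑ i ∈ Finset.range (m+1), ‖a i - z‖^2
      = ∑ i ∈ Finset.range m, ‖a i - z‖^2 + ‖a m - z‖^2 := by
    rw [Finset.sum_range_succ]
  have hmono : ∑ i ∈ Finset.range m, ‖a (i+1) - T z‖^2
      ≤ ∑ i ∈ Finset.range m, ‖a i - z‖^2 := by
    apply Finset.sum_le_sum
    intro i _
    exact pow_le_pow_left₀ (norm_nonneg _) (step i) 2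
  have hd0 : ‖a 0 - T z‖ ≤ Metric.diam C := by
    have := Metric.dist_le_diam_of_mem hCbdd (hamem 0) hTz
    simpa [dist_eq_norm] using this
  have hbound : ((m+1:ℕ):ℝ) * ‖z - T z‖^2 ≤ (Metric.diam C)^2 := by
    rw [← key, Finset.sum_sub_distrib, sum1, sum2]
    have h1 : ‖a 0 - T z‖^2 ≤ (Metric.diam C)^2 :=
      pow_le_pow_left₀ (norm_nonneg _) hd0 2
    nlinarith [sq_nonneg (‖a m - z‖)]
  -- conclude
  have hdnn : 0 ≤ Metric.diam C := Metric.diam_nonneg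
  have hsq : ‖z - T z‖^2 ≤ (Metric.diam C / Real.sqrt (m+1:ℕ))^2 := by
    rw [div_pow, Real.sq_sqrt (by positivity)]
    rw [le_div_iff₀ (by exact_mod_cast hnpos)]
    linarith [hbound]
  calc ‖(1 / ((m+1:ℕ):ℝ)) • ∑ i ∈ Finset.range (m+1), T^[i] x -
          T ((1 / ((m+1:ℕ):ℝ)) • ∑ i ∈ Finset.range (m+1), T^[i] x)‖
      = ‖z - T z‖ := by rw [hz, hS, ha]
    _ ≤ Metric.diam C / Real.sqrt (m+1:ℕ) := by
        have := Real.sqrt_le_sqrt hsq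
        rwa [Real.sqrt_sq (norm_nonneg _), Real.sqrt_sq (by positivity)] at this
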